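/- Suppose g_i ∈ ℂ[∂,λ] for i ∈ ℤ satisfy g_j(∂+λ,μ)·g_i(∂,λ) = g_i(∂+μ,λ)·g_j(∂,μ) in ℂ[∂,λ,μ] for all i, j. Then each g_i is independent of ∂, i.e., g_i ∈ ℂ[λ]. -/

import Mathlib

open Polynomial

private lemma aux_taylor_top (q : Polynomial ℂ) (D : ℕ) (hq : q.natDegree ≤ D) (l : ℂ) :
    (Polynomial.taylor l q).coeff D = q.coeff D := by
  rw [taylor_coeff]
  have h1 : (hasseDeriv D q).natDegree ≤ 0 := le_trans (natDegree_hasseDeriv_le q D) (by omega)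
  rw [Polynomial.eq_C_of_natDegree_le_zero h1, eval_C, hasseDeriv_coeff]
  simp

private lemma aux_taylor_pred (q : Polynomial ℂ) (D : ℕ) (hD : 1 ≤ D) (hq : q.natDegree ≤ D)
    (l : ℂ) :
    (Polynomial.taylor l q).coeff (D - 1) = q.coeff (D - 1) + D * q.coeff D * l := by
  rw [taylor_coeff]
  have h1 : (hasseDeriv (D-1) q).natDegree < 2 :=
    lt_of_le_of_lt (le_trans (natDegree_hasseDeriv_le q (D-1)) (by omega)) one_lt_two
  rw [Polynomial.eval_eq_sum_range' h1, Finset.sum_range_succ, Finset.sum_range_succ,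
    Finset.sum_range_zero, hasseDeriv_coeff, hasseDeriv_coeff]
  have e1 : 1 + (D - 1) = D := by omega
  have e2 : D.choose (D - 1) = D := by
    have := Nat.choose_symm (n := D) (k := 1) hD
    simp only [Nat.choose_one_right] at this
    omega
  rw [e1, e2]

  ring_nf
  simp [Nat.choose_self]

private lemma aux_coeff_mul_pred (f g : Polynomial ℂ) (D : ℕ) (hD : 1 ≤ D)
    (hf : f.natDegree ≤ D) (hg : g.natDegree ≤ D) :
    (f * g).coeff (2*D - 1) = f.coeff D * g.coeff (D-1) + f.coeff (D-1) * g.coeff D := by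
  rw [coeff_mul, Finset.Nat.sum_antidiagonal_eq_sum_range_succ_mk]
  have h2 : (2*D - 1).succ = 2*D := by omega
  rw [h2]
  have hsub : ({D-1, D} : Finset ℕ) ⊆ Finset.range (2*D) := by
    intro i hi
    simp only [Finset.mem_insert, Finset.mem_singleton] at hi
    simp only [Finset.mem_range]
    omega
  rw [← Finset.sum_subset hsub ?_]
  · rw [Finset.sum_insert (by simp; omega), Finset.sum_singleton]
    have e1 : 2*D - 1 - (D-1) = D := by omega
    have e2 : 2*D - 1 - D = D - 1 := by omega
    rw [e1, e2]
    ring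
  · intro i hi hni
    simp only [Finset.mem_insert, Finset.mem_singleton] at hni
    push_neg at hni
    simp only [Finset.mem_range] at hi
    by_cases hiD : D < i
    · rw [Polynomial.coeff_eq_zero_of_natDegree_lt (lt_of_le_of_lt hf hiD), zero_mul]
    · have : D < 2*D - 1 - i := by omega
      rw [Polynomial.coeff_eq_zero_of_natDegree_lt (lt_of_le_of_lt hg this), mul_zero]

open Polynomial

private lemma aux_eval_aeval (f : Fin 2 → Polynomial ℂ) (P : MvPolynomial (Fin 2) ℂ) (x : ℂ) :
    Polynomial.eval x (MvPolynomial.aeval f P) = MvPolynomial.eval (fun j => (f j).eval x) P := by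
  induction P using MvPolynomial.induction_on with
  | C a => simp
  | add p q hp hq => simp [hp, hq]
  | mul_X p n hp => simp [hp]

private lemma aux_map_aeval (f : Fin 2 → Polynomial (Polynomial ℂ)) (P : MvPolynomial (Fin 2) ℂ)
    (y : ℂ) :
    Polynomial.map (Polynomial.evalRingHom y) (MvPolynomial.aeval f P)
      = MvPolynomial.aeval (fun j => (f j).map (Polynomial.evalRingHom y)) P := by
  induction P using MvPolynomial.induction_on with
  | C a => simp [MvPolynomial.algebraMap_eq]
  | add p q hp hq => simp [hp, hq]
  | mul_X p n hp => simp [hp]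

/-- If g_j(∂+λ,μ)g_i(∂,λ) = g_i(∂+μ,λ)g_j(∂,μ) for all i,j, then each g_i is
independent of ∂, i.e. g_i ∈ ℂ[λ]. -/
theorem stmt6 (g : ℤ → MvPolynomial (Fin 2) ℂ)
    (h : ∀ (i j : ℤ) (x l m : ℂ),
      MvPolynomial.eval ![x + l, m] (g j) * MvPolynomial.eval ![x, l] (g i)
        = MvPolynomial.eval ![x + m, l] (g i) * MvPolynomial.eval ![x, m] (g j)) :
    ∀ i : ℤ, ∃ q : Polynomial ℂ,
      ∀ x y : ℂ, MvPolynomial.eval ![x, y] (g i) = q.eval y := by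
  intro i
  set P := g i with hPdef
  by_cases hP0 : P = 0
  · exact ⟨0, fun x y => by simp [hP0]⟩
  set p : ℂ → Polynomial ℂ := fun y => MvPolynomial.aeval ![Polynomial.X, Polynomial.C y] P
    with hpdef
  have hev : ∀ x y : ℂ, (p y).eval x = MvPolynomial.eval ![x, y] P := by
    intro x y
    rw [hpdef]
    rw [aux_eval_aeval]
    have hfun : (fun j => Polynomial.eval x (![Polynomial.X, Polynomial.C y] j)) = ![x, y] := by
      funext j; fin_cases j <;> simp
    rw [hfun]
  set PP : Polynomial (Polynomial ℂ) :=
    MvPolynomial.aeval ![Polynomial.X, Polynomial.C Polynomial.X] P with hPPdef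
  have hmap : ∀ y : ℂ, PP.map (Polynomial.evalRingHom y) = p y := by
    intro y
    rw [hPPdef, aux_map_aeval, hpdef]
    have hfun : (fun j => Polynomial.map (Polynomial.evalRingHom y)
        (![Polynomial.X, Polynomial.C Polynomial.X] j))
        = ![Polynomial.X, Polynomial.C y] := by
      funext j; fin_cases j <;> simp
    rw [hfun]
  have hPPne : PP ≠ 0 := by
    intro h0
    apply hP0
    have : ∀ x : Fin 2 → ℂ, MvPolynomial.eval x P = MvPolynomial.eval x 0 := by
      intro x
      have hx : x = ![x 0, x 1] := by funext j; fin_cases j <;> rfl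
      rw [map_zero, hx, ← hev (x 0) (x 1), ← hmap (x 1), h0, Polynomial.map_zero,
        Polynomial.eval_zero]
    exact MvPolynomial.funext this
  set D := PP.natDegree with hDdef
  set cD := PP.coeff D with hcDdef
  have hcDne : cD ≠ 0 := by
    rw [hcDdef, hDdef]
    exact Polynomial.leadingCoeff_ne_zero.mpr hPPne
  have hco : ∀ (y : ℂ) (k : ℕ), (p y).coeff k = (PP.coeff k).eval y := by
    intro y k
    rw [← hmap y, Polynomial.coeff_map, Polynomial.coe_evalRingHom]
  have hdeg : ∀ y : ℂ, (p y).natDegree ≤ D := by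
    intro y
    rw [← hmap y, hDdef]
    exact Polynomial.natDegree_map_le
  have hD0 : D = 0 := by
    by_contra hDne
    have hD1 : 1 ≤ D := by omega
    have hinf : {x : ℂ | ¬ cD.IsRoot x}.Infinite := by
      have := (Polynomial.finite_setOf_isRoot hcDne).infinite_compl
      convert this using 1
      rfl
    obtain ⟨l, hl⟩ := hinf.nonempty
    obtain ⟨m, hm⟩ := (hinf.diff (Set.finite_singleton l)).nonempty
    have hml : m ≠ l := by
      intro hc
      exact hm.2 (by simp [hc])
    have hl' : cD.eval l ≠ 0 := hl
    have hm' : cD.eval m ≠ 0 := hm.1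
    have hid : Polynomial.taylor l (p m) * p l = Polynomial.taylor m (p l) * p m := by
      apply Polynomial.funext
      intro x
      simp only [Polynomial.eval_mul, Polynomial.taylor_eval, hev]
      exact h i i x l m
    have hco2 := congrArg (fun q => Polynomial.coeff q (2*D-1)) hid
    rw [aux_coeff_mul_pred _ _ D hD1 (by rw [Polynomial.natDegree_taylor]; exact hdeg m) (hdeg l),
      aux_coeff_mul_pred _ _ D hD1 (by rw [Polynomial.natDegree_taylor]; exact hdeg l) (hdeg m),
      aux_taylor_top _ D (hdeg m) l, aux_taylor_pred _ D hD1 (hdeg m) l,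
      aux_taylor_top _ D (hdeg l) m, aux_taylor_pred _ D hD1 (hdeg l) m,
      hco l D, hco m D, ← hcDdef] at hco2
    have key : (D:ℂ) * cD.eval l * cD.eval m * (l - m) = 0 := by linear_combination hco2
    have hDc : (D:ℂ) ≠ 0 := Nat.cast_ne_zero.mpr hDne
    exact (mul_ne_zero (mul_ne_zero (mul_ne_zero hDc hl') hm')
      (sub_ne_zero.mpr (hml.symm))) key
  refine ⟨MvPolynomial.aeval ![(0:Polynomial ℂ), Polynomial.X] P, ?_⟩
  intro x y
  rw [aux_eval_aeval]
  have h1 : (fun j => (![(0:Polynomial ℂ), Polynomial.X] j).eval y) = ![(0:ℂ), y] := by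
    funext j; fin_cases j <;> simp
  rw [h1, ← hev x y, ← hev 0 y]
  have h2 : (p y).natDegree ≤ 0 := le_trans (hdeg y) (le_of_eq hD0)
  rw [Polynomial.eq_C_of_natDegree_le_zero h2]
  simp
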